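/- Let φ : ℝⁿ → ℝ be twice continuously differentiable and convex, let f : ℝⁿ → ℝ be continuously differentiable, let g : ℝⁿ → ℝ be convex, and set Ψ := f + g. Fix x ∈ ℝⁿ and λ > 0, and let d ∈ ℝⁿ be a minimizer of u ↦ ⟨∇f(x), u⟩ + g(x + u) + (1/(2λ))⟨∇²φ(x)u, u⟩ over ℝⁿ. If d ≠ 0 and ⟨∇²φ(x)d, d⟩ > 0, then d is a descent direction for Ψ at x: there exists t̄ ∈ (0, 1] such that Ψ(x + t·d) < Ψ(x) for every t ∈ (0, t̄]. -/

import Mathlib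

open scoped RealInnerProductSpace

/-- Hessian–vector product `∇²φ(x) d`. -/
noncomputable def hessApply {n : ℕ} (φ : EuclideanSpace ℝ (Fin n) → ℝ)
    (x d : EuclideanSpace ℝ (Fin n)) : EuclideanSpace ℝ (Fin n) :=
  fderiv ℝ (gradient φ) x d

theorem abpg_descent_direction {n : ℕ}
    (φ f g : EuclideanSpace ℝ (Fin n) → ℝ)
    (hφ : ContDiff ℝ 2 φ) (hφconv : ConvexOn ℝ Set.univ φ)
    (hf : ContDiff ℝ 1 f) (hg : ConvexOn ℝ Set.univ g)
    (Ψ : EuclideanSpace ℝ (Fin n) → ℝ) (hΨ : Ψ = fun y => f y + g y)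
    (x : EuclideanSpace ℝ (Fin n)) (lam : ℝ) (hlam : 0 < lam)
    (d : EuclideanSpace ℝ (Fin n))
    (hd : ∀ u : EuclideanSpace ℝ (Fin n),
      ⟪gradient f x, d⟫ + g (x + d) + (1 / (2 * lam)) * ⟪hessApply φ x d, d⟫ ≤
      ⟪gradient f x, u⟫ + g (x + u) + (1 / (2 * lam)) * ⟪hessApply φ x u, u⟫)
    (hd0 : d ≠ 0) (hpos : 0 < ⟪hessApply φ x d, d⟫) :
    ∃ tbar : ℝ, tbar ∈ Set.Ioc (0 : ℝ) 1 ∧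
      ∀ t ∈ Set.Ioc (0 : ℝ) tbar, Ψ (x + t • d) < Ψ x := by
  have hfd : DifferentiableAt ℝ f x := (hf.differentiable one_ne_zero).differentiableAt
  set Q : ℝ := ⟪hessApply φ x d, d⟫ with hQdef
  set L : ℝ := ⟪gradient f x, d⟫ with hLdef
  -- minimizer condition at u = 0
  have h0 : L + g (x + d) - g x ≤ -(Q / (2 * lam)) := by
    have h := hd 0
    simp only [hessApply, map_zero, inner_zero_left, inner_zero_right, add_zero,
      mul_zero] at h
    have h2 : (1 / (2 * lam)) * Q = Q / (2 * lam) := by ring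
    linarith [h, h2.ge]
  -- derivative of t ↦ f (x + t • d) at 0
  have hc : HasDerivAt (fun t : ℝ => x + t • d) d 0 := by
    simpa using ((hasDerivAt_id (0 : ℝ)).smul_const d).const_add x
  have hder : HasDerivAt (fun t : ℝ => f (x + t • d)) L 0 := by
    have hx0 : x + (0 : ℝ) • d = x := by simp
    have hF : HasFDerivAt f (fderiv ℝ f x) (x + (0 : ℝ) • d) := by
      rw [hx0]; exact hfd.hasFDerivAt
    have := hF.comp_hasDerivAt 0 hc
    have hL' : L = fderiv ℝ f x d := by
      rw [hLdef, gradient]; exact InnerProductSpace.toDual_symm_apply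
    rw [hL']
    exact this
  have hε : (0 : ℝ) < Q / (4 * lam) := by positivity
  have hslope : Filter.Tendsto (slope (fun t : ℝ => f (x + t • d)) 0)
      (nhdsWithin 0 {(0 : ℝ)}ᶜ) (nhds L) := hasDerivAt_iff_tendsto_slope.mp hder
  have hev : ∀ᶠ t in nhdsWithin 0 {(0 : ℝ)}ᶜ,
      slope (fun t : ℝ => f (x + t • d)) 0 t < L + Q / (4 * lam) :=
    hslope.eventually_lt_const (by linarith)
  rw [eventually_nhdsWithin_iff, Metric.eventually_nhds_iff] at hev
  obtain ⟨δ, hδpos, hδ⟩ := hev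
  refine ⟨min (δ / 2) 1, ⟨lt_min (by linarith) one_pos, min_le_right _ _⟩, ?_⟩
  rintro t ⟨ht0, ht1⟩
  have ht1' : t ≤ 1 := ht1.trans (min_le_right _ _)
  have htδ : t < δ := lt_of_le_of_lt (ht1.trans (min_le_left _ _)) (by linarith)
  have hdist : dist t 0 < δ := by
    rw [Real.dist_eq, sub_zero, abs_of_pos ht0]; exact htδ
  have hsl := hδ hdist (by simpa using ne_of_gt ht0)
  have hslope_eq : slope (fun t : ℝ => f (x + t • d)) 0 t
      = (f (x + t • d) - f x) / t := by
    simp [slope_def_field]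
  rw [hslope_eq] at hsl
  have hfle : f (x + t • d) - f x < t * (L + Q / (4 * lam)) := by
    rw [div_lt_iff₀ ht0] at hsl
    linarith [hsl]
  -- convexity of g
  have hgle : g (x + t • d) ≤ (1 - t) * g x + t * g (x + d) := by
    have := hg.2 (Set.mem_univ x) (Set.mem_univ (x + d))
      (by linarith : (0:ℝ) ≤ 1 - t) (le_of_lt ht0) (by ring)
    have heq : (1 - t) • x + t • (x + d) = x + t • d := by module
    rw [heq] at this
    simpa [smul_eq_mul] using this
  rw [hΨ]
  simp only
  have key : t * (L + g (x + d) - g x) ≤ t * (-(Q / (2 * lam))) :=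
    mul_le_mul_of_nonneg_left h0 (le_of_lt ht0)
  have hQt : 0 < t * (Q / (4 * lam)) := mul_pos ht0 hε
  have e1 : t * (L + Q / (4 * lam)) = t * L + t * (Q / (4 * lam)) := by ring
  have e2 : (1 - t) * g x + t * g (x + d) = g x + t * (g (x + d) - g x) := by ring
  have e3 : t * (L + g (x + d) - g x) = t * L + t * (g (x + d) - g x) := by ring
  have e4 : t * (-(Q / (2 * lam))) = -2 * (t * (Q / (4 * lam))) := by ring
  linarith [hfle, hgle, key, hQt, e1, e2, e3, e4]
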